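/- Let X be a compact LOTS with a monotone closure-preserving operator r. Then X admits a monotone operator r₂ such that for every open cover U, r₂(U) is a finite cover of X by convex sets refining U which is closure-preserving, and if U refines V then r₂(U) refines r₂(V). Moreover, if r produces open covers, r₂ can be chosen to produce open covers. -/

import Mathlib

open Set Topology Filter

variable {X : Type*}

/-- A family `F` of subsets is closure-preserving if for every subfamily `H ⊆ F`,
the closure of the union of `H` is the union of the closures of members of `H`. -/
def ClosurePreserving [TopologicalSpace X] (F : Set (Set X)) : Prop :=
  ∀ H ⊆ F, closure (⋃₀ H) = ⋃ A ∈ H, closure A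

/-- A cover `A` refines a cover `B` if every member of `A` is contained in some member of `B`. -/
def Refines (A B : Set (Set X)) : Prop :=
  ∀ s ∈ A, ∃ t ∈ B, s ⊆ t

/-- An open cover of the space. -/
def IsOpenCover [TopologicalSpace X] (U : Set (Set X)) : Prop :=
  (∀ s ∈ U, IsOpen s) ∧ ⋃₀ U = Set.univ

/-- A monotone closure-preserving operator: assigns to each open cover `U` a
closure-preserving cover `r U` (by arbitrary sets) refining `U`, monotonically. -/
def MonotoneCPOperator [TopologicalSpace X] (r : Set (Set X) → Set (Set X)) : Prop :=
  (∀ U, IsOpenCover U →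
    ⋃₀ r U = Set.univ ∧ Refines (r U) U ∧ ClosurePreserving (r U)) ∧
  ∀ U V, IsOpenCover U → IsOpenCover V → Refines U V → Refines (r U) (r V)

/-- A GO-space: the topology is finer than the order topology (all open rays are open)
and has a base of order-convex sets. -/
def IsGOSpace (X : Type*) [LinearOrder X] [TopologicalSpace X] : Prop :=
  (∀ a : X, IsOpen (Set.Iio a)) ∧ (∀ a : X, IsOpen (Set.Ioi a)) ∧
  ∀ s : Set X, IsOpen s → ∀ x ∈ s, ∃ t : Set X, IsOpen t ∧ x ∈ t ∧ t ⊆ s ∧ t.OrdConnected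

set_option linter.unusedSectionVars false
set_option maxHeartbeats 1000000

section Hull

variable [LinearOrder X]

/-- The order-convex hull of a set. -/
def cHull (A : Set X) : Set X := ⋃ a ∈ A, ⋃ b ∈ A, Icc a b

lemma mem_cHull {A : Set X} {x : X} : x ∈ cHull A ↔ ∃ a ∈ A, ∃ b ∈ A, a ≤ x ∧ x ≤ b := by
  simp only [cHull, mem_iUnion, mem_Icc, exists_prop]

lemma subset_cHull (A : Set X) : A ⊆ cHull A := fun x hx =>
  mem_cHull.2 ⟨x, hx, x, hx, le_rfl, le_rfl⟩

lemma cHull_ordConnected (A : Set X) : (cHull A).OrdConnected := by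
  constructor
  intro x hx y hy z hz
  obtain ⟨a, ha, _, _, hax, _⟩ := mem_cHull.1 hx
  obtain ⟨_, _, d, hd, _, hyd⟩ := mem_cHull.1 hy
  exact mem_cHull.2 ⟨a, ha, d, hd, hax.trans hz.1, hz.2.trans hyd⟩

lemma cHull_subset {A C : Set X} (hAC : A ⊆ C) (hC : C.OrdConnected) : cHull A ⊆ C := by
  intro x hx
  obtain ⟨a, ha, b, hb, h1, h2⟩ := mem_cHull.1 hx
  exact hC.out (hAC ha) (hAC hb) ⟨h1, h2⟩

lemma cHull_mono {A B : Set X} (h : A ⊆ B) : cHull A ⊆ cHull B := by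
  intro x hx
  obtain ⟨a, ha, b, hb, h1, h2⟩ := mem_cHull.1 hx
  exact mem_cHull.2 ⟨a, h ha, b, h hb, h1, h2⟩

lemma cHull_nonempty {A : Set X} (h : (cHull A).Nonempty) : A.Nonempty := by
  obtain ⟨x, hx⟩ := h
  obtain ⟨a, ha, -⟩ := mem_cHull.1 hx
  exact ⟨a, ha⟩

variable [TopologicalSpace X] [OrderTopology X]

lemma cHull_isOpen {A : Set X} (hA : IsOpen A) : IsOpen (cHull A) := by
  rw [isOpen_iff_forall_mem_open]
  intro x hx
  obtain ⟨a, ha, b, hb, h1, h2⟩ := mem_cHull.1 hx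
  rcases h1.eq_or_lt with rfl | h1'
  · exact ⟨A, subset_cHull A, hA, ha⟩
  rcases h2.eq_or_lt with rfl | h2'
  · exact ⟨A, subset_cHull A, hA, hb⟩
  · exact ⟨Ioo a b, fun y hy => mem_cHull.2 ⟨a, ha, b, hb, hy.1.le, hy.2.le⟩, isOpen_Ioo,
      ⟨h1', h2'⟩⟩

/-- Every point of an open set has an open order-convex neighborhood inside it. -/
lemma exists_ordConnected_nbhd {t : Set X} (ht : IsOpen t) {x : X} (hx : x ∈ t) :
    ∃ c : Set X, IsOpen c ∧ c.OrdConnected ∧ x ∈ c ∧ c ⊆ t := by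
  have key : ∀ s : Set X, TopologicalSpace.GenerateOpen { s : Set X | ∃ a, s = Ioi a ∨ s = Iio a } s →
      ∀ x ∈ s, ∃ c : Set X, IsOpen c ∧ c.OrdConnected ∧ x ∈ c ∧ c ⊆ s := by
    intro s hs
    induction hs with
    | basic u hu =>
      intro x hxu
      obtain ⟨a, rfl | rfl⟩ := hu
      · exact ⟨Ioi a, isOpen_Ioi, ordConnected_Ioi, hxu, Subset.rfl⟩
      · exact ⟨Iio a, isOpen_Iio, ordConnected_Iio, hxu, Subset.rfl⟩
    | univ => exact fun x _ => ⟨univ, isOpen_univ, ordConnected_univ, mem_univ x, Subset.rfl⟩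
    | inter u v _ _ ihu ihv =>
      intro x hxuv
      obtain ⟨c₁, hc₁o, hc₁c, hxc₁, hc₁u⟩ := ihu x hxuv.1
      obtain ⟨c₂, hc₂o, hc₂c, hxc₂, hc₂v⟩ := ihv x hxuv.2
      exact ⟨c₁ ∩ c₂, hc₁o.inter hc₂o, hc₁c.inter hc₂c, ⟨hxc₁, hxc₂⟩,
        inter_subset_inter hc₁u hc₂v⟩
    | sUnion S _ ih =>
      intro x hxS
      obtain ⟨u, huS, hxu⟩ := hxS
      obtain ⟨c, h1, h2, h3, h4⟩ := ih u huS x hxu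
      exact ⟨c, h1, h2, h3, h4.trans (subset_sUnion_of_mem huS)⟩
  have ht' : TopologicalSpace.GenerateOpen { s : Set X | ∃ a, s = Ioi a ∨ s = Iio a } t := by
    have := OrderTopology.topology_eq_generate_intervals (α := X)
    rw [this] at ht
    exact ht
  exact key t ht' x hx

variable [CompactSpace X]

/-- Endpoint description of the convex hull in a compact LOTS. -/
lemma cHull_spec {A : Set X} (hA : A.Nonempty) :
    ∃ a b : X, a ≤ b ∧ a ∈ closure A ∧ b ∈ closure A ∧ Ioo a b ⊆ cHull A ∧
      cHull A ⊆ Icc a b ∧ closure (cHull A) = Icc a b := by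
  obtain ⟨a, ha⟩ := (isClosed_closure (s := A)).isCompact.exists_isLeast hA.closure
  obtain ⟨b, hb⟩ := (isClosed_closure (s := A)).isCompact.exists_isGreatest hA.closure
  have hab : a ≤ b := ha.2 hb.1
  have hsub : cHull A ⊆ Icc a b := by
    intro x hx
    obtain ⟨c, hc, d, hd, h1, h2⟩ := mem_cHull.1 hx
    exact ⟨(ha.2 (subset_closure hc)).trans h1, h2.trans (hb.2 (subset_closure hd))⟩
  have hIoo : Ioo a b ⊆ cHull A := by
    intro x hx
    have h1 : ∃ c ∈ A, c ≤ x := by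
      by_contra h
      push_neg at h
      have hsub' : closure A ⊆ Ici x :=
        closure_minimal (fun c hc => (h c hc).le) isClosed_Ici
      exact absurd (hsub' ha.1) (not_le.2 hx.1)
    have h2 : ∃ d ∈ A, x ≤ d := by
      by_contra h
      push_neg at h
      have hsub' : closure A ⊆ Iic x :=
        closure_minimal (fun c hc => (h c hc).le) isClosed_Iic
      exact absurd (hsub' hb.1) (not_le.2 hx.2)
    obtain ⟨c, hc, hcx⟩ := h1
    obtain ⟨d, hd, hxd⟩ := h2
    exact mem_cHull.2 ⟨c, hc, d, hd, hcx, hxd⟩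
  refine ⟨a, b, hab, ha.1, hb.1, hIoo, hsub, ?_⟩
  apply Subset.antisymm (closure_minimal hsub isClosed_Icc)
  intro x hx
  rcases hx.1.eq_or_lt with rfl | h1
  · exact closure_mono (subset_cHull A) ha.1
  rcases hx.2.eq_or_lt with rfl | h2
  · exact closure_mono (subset_cHull A) hb.1
  · exact subset_closure (hIoo ⟨h1, h2⟩)

end Hull


section CP
variable [LinearOrder X] [TopologicalSpace X] [OrderTopology X] [CompactSpace X]

/-- Goodness: a nonempty set sandwiched between an open interval and closed interval. -/
def IsGood (B : Set X) : Prop :=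
  B.Nonempty → ∃ a b : X, a ≤ b ∧ Ioo a b ⊆ B ∧ B ⊆ Icc a b ∧ closure B = Icc a b

lemma isGood_cHull (A : Set X) : IsGood (cHull A) := by
  intro hne
  obtain ⟨a, b, h1, _, _, h4, h5, h6⟩ := cHull_spec (cHull_nonempty hne)
  exact ⟨a, b, h1, h4, h5, h6⟩

lemma closurePreserving_mono {F G : Set (Set X)} (h : ClosurePreserving F) (hGF : G ⊆ F) :
    ClosurePreserving G := fun H hH => h H (hH.trans hGF)

/-- The convex hulls of a closure-preserving family form a closure-preserving family. -/
lemma closurePreserving_cHull_image {F : Set (Set X)} (hF : ClosurePreserving F) :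
    ClosurePreserving (cHull '' F) := by
  intro H hH
  apply Subset.antisymm
  · intro x hx
    by_contra hx'
    simp only [mem_iUnion, exists_prop, not_exists, not_and] at hx'
    set F₁ : Set (Set X) := {A ∈ F | cHull A ∈ H ∧ A.Nonempty} with hF₁
    set FL : Set (Set X) := {A ∈ F₁ | closure (cHull A) ⊆ Iio x} with hFL
    set FR : Set (Set X) := {A ∈ F₁ | closure (cHull A) ⊆ Ioi x} with hFR
    have hsplit : ∀ A ∈ F₁, A ∈ FL ∨ A ∈ FR := by
      intro A hA
      obtain ⟨a, b, hab, _, _, hIoo, hIcc, hcl⟩ := cHull_spec hA.2.2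
      have hxn : x ∉ Icc a b := by
        rw [← hcl]; exact fun h => hx' (cHull A) hA.2.1 h
      rcases lt_or_ge x a with h | h
      · right
        refine ⟨hA, ?_⟩
        rw [hcl]
        exact fun y hy => lt_of_lt_of_le h hy.1
      · have hbx : b < x := by
          by_contra h'
          exact hxn ⟨h, le_of_not_gt h'⟩
        left
        refine ⟨hA, ?_⟩
        rw [hcl]
        exact fun y hy => lt_of_le_of_lt hy.2 hbx
    set SL : Set X := ⋃ A ∈ FL, cHull A with hSL
    set SR : Set X := ⋃ A ∈ FR, cHull A with hSR
    have hcover : ⋃₀ H ⊆ SL ∪ SR := by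
      intro y hy
      obtain ⟨B, hB, hyB⟩ := hy
      obtain ⟨A₀, hA₀F, rfl⟩ := hH hB
      have hA₀ : A₀ ∈ F₁ := ⟨hA₀F, hB, cHull_nonempty ⟨y, hyB⟩⟩
      rcases hsplit A₀ hA₀ with h | h
      · exact Or.inl (mem_biUnion h hyB)
      · exact Or.inr (mem_biUnion h hyB)
    have hx2 : x ∈ closure SL ∪ closure SR := by
      rw [← closure_union]
      exact closure_mono hcover hx
    -- a helper to finish each side
    have finishL : x ∈ closure SL → False := by
      intro hxL
      have hkey : x ∈ closure (⋃₀ FL) := by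
        rw [mem_closure_iff]
        intro o ho hxo
        obtain ⟨c, hco, hcc, hxc, hcsub⟩ := exists_ordConnected_nbhd ho hxo
        obtain ⟨y, hyc, hySL⟩ := mem_closure_iff.1 hxL c hco hxc
        obtain ⟨A₀, hA₀, hyA₀⟩ := mem_iUnion₂.1 hySL
        obtain ⟨a, b, hab, haA, hbA, hIoo, hIcc, hcl⟩ := cHull_spec hA₀.1.2.2
        have hbx : b < x := by
          apply hA₀.2
          rw [hcl]
          exact ⟨hab, le_rfl⟩
        have hbc : b ∈ c := hcc.out hyc hxc ⟨(hIcc hyA₀).2, hbx.le⟩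
        obtain ⟨w, hwc, hwA₀⟩ := mem_closure_iff.1 hbA c hco hbc
        exact ⟨w, hcsub hwc, mem_sUnion.2 ⟨A₀, hA₀, hwA₀⟩⟩
      rw [hF FL (fun A hA => hA.1.1)] at hkey
      obtain ⟨A₁, hA₁, hxA₁⟩ := mem_iUnion₂.1 hkey
      have : x ∈ Iio x := hA₁.2 (closure_mono (subset_cHull A₁) hxA₁)
      exact lt_irrefl x this
    have finishR : x ∈ closure SR → False := by
      intro hxR
      have hkey : x ∈ closure (⋃₀ FR) := by
        rw [mem_closure_iff]
        intro o ho hxo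
        obtain ⟨c, hco, hcc, hxc, hcsub⟩ := exists_ordConnected_nbhd ho hxo
        obtain ⟨y, hyc, hySR⟩ := mem_closure_iff.1 hxR c hco hxc
        obtain ⟨A₀, hA₀, hyA₀⟩ := mem_iUnion₂.1 hySR
        obtain ⟨a, b, hab, haA, hbA, hIoo, hIcc, hcl⟩ := cHull_spec hA₀.1.2.2
        have hax : x < a := by
          apply hA₀.2
          rw [hcl]
          exact ⟨le_rfl, hab⟩
        have hac : a ∈ c := hcc.out hxc hyc ⟨hax.le, (hIcc hyA₀).1⟩
        obtain ⟨w, hwc, hwA₀⟩ := mem_closure_iff.1 haA c hco hac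
        exact ⟨w, hcsub hwc, mem_sUnion.2 ⟨A₀, hA₀, hwA₀⟩⟩
      rw [hF FR (fun A hA => hA.1.1)] at hkey
      obtain ⟨A₁, hA₁, hxA₁⟩ := mem_iUnion₂.1 hkey
      have : x ∈ Ioi x := hA₁.2 (closure_mono (subset_cHull A₁) hxA₁)
      exact lt_irrefl x this
    rcases hx2 with h | h
    · exact finishL h
    · exact finishR h
  · intro x hx
    simp only [mem_iUnion, exists_prop] at hx
    obtain ⟨A, hA, hxA⟩ := hx
    exact closure_mono (subset_sUnion_of_mem hA) hxA


lemma Icc_endpoints_eq {a b a' b' : X} (hab : a ≤ b) (h : Icc a b = Icc a' b') :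
    a = a' ∧ b = b' := by
  have h1 : a ∈ Icc a' b' := h ▸ left_mem_Icc.2 hab
  have h2 : b ∈ Icc a' b' := h ▸ right_mem_Icc.2 hab
  have hab' : a' ≤ b' := h1.1.trans h1.2
  have h3 : a' ∈ Icc a b := h.symm ▸ left_mem_Icc.2 hab'
  have h4 : b' ∈ Icc a b := h.symm ▸ right_mem_Icc.2 hab'
  exact ⟨le_antisymm h3.1 h1.1, le_antisymm h2.2 h4.2⟩

/-- Elements with prescribed "good" endpoints form a set of at most 4 sets. -/
lemma good_four {a b : X} :
    {B : Set X | Ioo a b ⊆ B ∧ B ⊆ Icc a b} ⊆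
      {Ioo a b, insert a (Ioo a b), insert b (Ioo a b), insert a (insert b (Ioo a b))} := by
  intro B hB
  obtain ⟨h1, h2⟩ := hB
  have key : ∀ x ∈ B, x = a ∨ x = b ∨ x ∈ Ioo a b := by
    intro x hx
    have hx' := h2 hx
    rcases hx'.1.eq_or_lt with rfl | hax
    · exact Or.inl rfl
    rcases hx'.2.eq_or_lt with rfl | hxb
    · exact Or.inr (Or.inl rfl)
    · exact Or.inr (Or.inr ⟨hax, hxb⟩)
  by_cases ha : a ∈ B <;> by_cases hb : b ∈ B
  · right; right; right
    apply Subset.antisymm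
    · intro x hx
      rcases key x hx with rfl | rfl | h
      · exact mem_insert _ _
      · exact mem_insert_of_mem _ (mem_insert _ _)
      · exact mem_insert_of_mem _ (mem_insert_of_mem _ h)
    · intro x hx
      rcases hx with rfl | hx
      · exact ha
      rcases hx with rfl | hx
      · exact hb
      · exact h1 hx
  · right; left
    apply Subset.antisymm
    · intro x hx
      rcases key x hx with rfl | rfl | h
      · exact mem_insert _ _
      · exact absurd hx hb
      · exact mem_insert_of_mem _ h
    · intro x hx
      rcases hx with rfl | hx
      · exact ha
      · exact h1 hx
  · right; right; left
    apply Subset.antisymm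
    · intro x hx
      rcases key x hx with rfl | rfl | h
      · exact absurd hx ha
      · exact mem_insert _ _
      · exact mem_insert_of_mem _ h
    · intro x hx
      rcases hx with rfl | hx
      · exact hb
      · exact h1 hx
  · left
    apply Subset.antisymm
    · intro x hx
      rcases key x hx with rfl | rfl | h
      · exact absurd hx ha
      · exact absurd hx hb
      · exact h
    · exact h1

/-- Zorn: every member of a closure-preserving family of good sets lies in a maximal member. -/
lemma exists_maximal_mem {G : Set (Set X)} (hCP : ClosurePreserving G)
    (hGood : ∀ B ∈ G, IsGood B) {B₀ : Set X} (hB₀ : B₀ ∈ G) :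
    ∃ m, Maximal (· ∈ G) m ∧ B₀ ⊆ m := by
  have hub : ∀ c ⊆ G, IsChain (· ⊆ ·) c → c.Nonempty → ∃ ub ∈ G, ∀ s ∈ c, s ⊆ ub := by
    intro c hcG hchain hcne
    by_cases hall : ∀ B ∈ c, B = (∅ : Set X)
    · obtain ⟨B, hB⟩ := hcne
      refine ⟨B, hcG hB, fun s hs => ?_⟩
      rw [hall s hs]
      exact empty_subset _
    push_neg at hall
    obtain ⟨Bs, hBsc, hBsne⟩ := hall
    have hBsne' : Bs.Nonempty := hBsne
    set c' : Set (Set X) := {B ∈ c | B.Nonempty} with hc'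
    have hc'G : c' ⊆ G := fun B hB => hcG hB.1
    have hKne : (⋃₀ c').Nonempty := ⟨hBsne'.some, mem_sUnion.2 ⟨Bs, ⟨hBsc, hBsne'⟩, hBsne'.some_mem⟩⟩
    set K : Set X := closure (⋃₀ c') with hK
    have hKcl : IsClosed K := isClosed_closure
    obtain ⟨bs, hbs⟩ := hKcl.isCompact.exists_isGreatest hKne.closure
    obtain ⟨as, has⟩ := hKcl.isCompact.exists_isLeast hKne.closure
    have hCPc := hCP c' hc'G
    -- endpoints of nonempty members
    have hgd : ∀ B ∈ c', ∃ a b : X, a ≤ b ∧ Ioo a b ⊆ B ∧ B ⊆ Icc a b ∧ closure B = Icc a b :=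
      fun B hB => hGood B (hc'G hB) hB.2
    have hclK : ∀ B ∈ c', closure B ⊆ K := fun B hB => closure_mono (subset_sUnion_of_mem hB)
    -- b-side attainment
    have hbmem : bs ∈ ⋃ B ∈ c', closure B := by rw [← hCPc]; exact hbs.1
    obtain ⟨B₁, hB₁, hbsB₁⟩ := mem_iUnion₂.1 hbmem
    obtain ⟨a₁, b₁, hab₁, hIoo₁, hIcc₁, hcl₁⟩ := hgd B₁ hB₁
    have hb₁ : b₁ = bs := by
      have h1 : bs ≤ b₁ := by rw [hcl₁] at hbsB₁; exact hbsB₁.2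
      have h2 : b₁ ≤ bs := hbs.2 (hclK B₁ hB₁ (hcl₁ ▸ right_mem_Icc.2 hab₁))
      exact le_antisymm h2 h1
    have hamem : as ∈ ⋃ B ∈ c', closure B := by rw [← hCPc]; exact has.1
    obtain ⟨B₂, hB₂, hasB₂⟩ := mem_iUnion₂.1 hamem
    obtain ⟨a₂, b₂, hab₂, hIoo₂, hIcc₂, hcl₂⟩ := hgd B₂ hB₂
    have ha₂ : a₂ = as := by
      have h1 : a₂ ≤ as := by rw [hcl₂] at hasB₂; exact hasB₂.1
      have h2 : as ≤ a₂ := has.2 (hclK B₂ hB₂ (hcl₂ ▸ left_mem_Icc.2 hab₂))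
      exact le_antisymm h1 h2
    -- the larger of B₁ B₂ has endpoints (as, bs)
    have hMex : ∃ M ∈ c', closure M = Icc as bs := by
      have htot := hchain.total hB₁.1 hB₂.1
      rcases htot with h | h
      · refine ⟨B₂, hB₂, ?_⟩
        have hb₂ : b₂ = bs := by
          have h1 : bs ≤ b₂ := by
            have : bs ∈ closure B₂ := closure_mono h (hbsB₁)
            rw [hcl₂] at this; exact this.2
          have h2 : b₂ ≤ bs := hbs.2 (hclK B₂ hB₂ (hcl₂ ▸ right_mem_Icc.2 hab₂))
          exact le_antisymm h2 h1
        rw [hcl₂, ha₂, hb₂]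
      · refine ⟨B₁, hB₁, ?_⟩
        have ha₁ : a₁ = as := by
          have h1 : a₁ ≤ as := by
            have : as ∈ closure B₁ := closure_mono h (hasB₂)
            rw [hcl₁] at this; exact this.1
          have h2 : as ≤ a₁ := has.2 (hclK B₁ hB₁ (hcl₁ ▸ left_mem_Icc.2 hab₁))
          exact le_antisymm h1 h2
        rw [hcl₁, ha₁, hb₁]
    obtain ⟨M, hMc', hMcl⟩ := hMex
    have habs : as ≤ bs := has.2 hbs.1
    -- the class of chain members with closure Icc as bs; it's finite, take its max
    set E : Set (Set X) := {B ∈ c' | closure B = Icc as bs} with hE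
    have hEfin : E.Finite := by
      apply Set.Finite.subset (Set.toFinite
        {Ioo as bs, insert as (Ioo as bs), insert bs (Ioo as bs), insert as (insert bs (Ioo as bs))})
      intro B hB
      obtain ⟨a, b, hab, hIoo, hIcc, hcl⟩ := hgd B hB.1
      have := Icc_endpoints_eq hab (hcl.symm.trans hB.2)
      obtain ⟨rfl, rfl⟩ := this
      exact good_four ⟨hIoo, hIcc⟩
    have hEne : E.Nonempty := ⟨M, hMc', hMcl⟩
    obtain ⟨m, hmE, hmmax⟩ : ∃ m ∈ E, ∀ B ∈ E, m ⊆ B → m = B := by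
      obtain ⟨m, hm⟩ := hEfin.exists_maximal hEne
      exact ⟨m, hm.1, fun B hB h => le_antisymm h (hm.2 hB h)⟩
    refine ⟨m, hc'G hmE.1, ?_⟩
    intro B hB
    rcases eq_empty_or_nonempty B with rfl | hBne
    · exact empty_subset _
    have hBc' : B ∈ c' := ⟨hB, hBne⟩
    rcases hchain.total hB hmE.1.1 with h | h
    · exact h
    · -- m ⊆ B forces B ∈ E, then B ⊆ m by maximality in E
      have hBE : B ∈ E := by
        refine ⟨hBc', ?_⟩
        obtain ⟨a, b, hab, hIoo, hIcc, hcl⟩ := hgd B hBc'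
        have hsub : Icc as bs ⊆ Icc a b := by
          rw [← hmE.2, ← hcl]; exact closure_mono h
        have h1 : a ≤ as ∧ bs ≤ b := by
          have h1' := hsub (left_mem_Icc.2 habs)
          have h2' := hsub (right_mem_Icc.2 habs)
          exact ⟨h1'.1, h2'.2⟩
        have h2 : as ≤ a := has.2 (hclK B hBc' (hcl ▸ left_mem_Icc.2 hab))
        have h3 : b ≤ bs := hbs.2 (hclK B hBc' (hcl ▸ right_mem_Icc.2 hab))
        rw [hcl, le_antisymm h1.1 h2, le_antisymm h3 h1.2]
      have := hmmax B hBE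
      rcases hchain.total hB hmE.1.1 with h' | h'
      · exact h'
      · exact (this h').symm.subset
  obtain ⟨m, hm1, hm2⟩ := zorn_subset_nonempty G hub B₀ hB₀
  exact ⟨m, hm2, hm1⟩

/-- The maximal members of a closure-preserving family of good sets form a finite family. -/
lemma maximal_finite {G : Set (Set X)} (hCP : ClosurePreserving G)
    (hGood : ∀ B ∈ G, IsGood B) : {B | Maximal (· ∈ G) B}.Finite := by
  set M : Set (Set X) := {B | Maximal (· ∈ G) B} with hMdef
  by_contra hfin
  have hinf : M.Infinite := hfin
  haveI : Infinite ↥M := hinf.to_subtype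
  have hneM : ∀ B ∈ M, B.Nonempty := by
    intro B hB
    rcases eq_empty_or_nonempty B with rfl | h
    · exfalso
      apply hinf
      apply Set.Finite.subset (finite_singleton (∅ : Set X))
      intro C hC
      have : C ⊆ (∅ : Set X) := hB.2 hC.1 (empty_subset C)
      exact subset_empty_iff.1 this
    · exact h
  have hex : ∀ B : ↥M, ∃ p : X × X, p.1 ≤ p.2 ∧ Ioo p.1 p.2 ⊆ (B : Set X) ∧
      (B : Set X) ⊆ Icc p.1 p.2 ∧ closure (B : Set X) = Icc p.1 p.2 := by
    intro B
    obtain ⟨a, b, h1, h2, h3, h4⟩ := hGood B B.2.1 (hneM B B.2)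
    exact ⟨(a, b), h1, h2, h3, h4⟩
  choose e he1 he2 he3 he4 using hex
  -- maximality: subset implies equal
  have hmaxle : ∀ B C : ↥M, (B : Set X) ⊆ (C : Set X) → B = C := by
    intro B C h
    exact Subtype.ext (le_antisymm h (B.2.2 C.2.1 h))
  -- no strict nesting of endpoint intervals
  have hP2 : ∀ B C : ↥M, (e B).1 < (e C).1 → (e C).2 < (e B).2 → False := by
    intro B C h1 h2
    have hsub : (C : Set X) ⊆ (B : Set X) := fun x hx =>
      he2 B ⟨lt_of_lt_of_le h1 (he3 C hx).1, lt_of_le_of_lt (he3 C hx).2 h2⟩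
    have := hmaxle C B hsub
    have h3 : (e C).1 = (e B).1 := congrArg (fun D => (e D).1) this
    exact absurd h3 (ne_of_gt h1)
  have hP3 : ∀ B C : ↥M, (e B).2 = (e C).2 → (e B).1 < (e C).1 →
      (e B).2 ∈ (C : Set X) ∧ (e B).2 ∉ (B : Set X) := by
    intro B C hb ha
    have hBC : B ≠ C := by
      intro h
      exact absurd (congrArg (fun D => (e D).1) h) (ne_of_lt ha)
    have hsub : (C : Set X) ⊆ insert ((e B).2) (B : Set X) := by
      intro x hx
      have hx' := he3 C hx
      rcases hx'.2.eq_or_lt with h | h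
      · have : x = (e B).2 := by rw [h, hb]
        rw [this]; exact mem_insert _ _
      · refine mem_insert_of_mem _ (he2 B ⟨lt_of_lt_of_le ha hx'.1, ?_⟩)
        rw [hb]; exact h
    have hns : ¬(C : Set X) ⊆ (B : Set X) := fun h => hBC (hmaxle C B h).symm
    obtain ⟨x, hxC, hxB⟩ := not_subset.1 hns
    have hxb : x = (e B).2 := by
      rcases hsub hxC with h | h
      · exact h
      · exact absurd h hxB
    exact ⟨hxb ▸ hxC, fun hbB => hxB (hxb ▸ hbB)⟩
  have hP3' : ∀ B C : ↥M, (e B).1 = (e C).1 → (e C).2 < (e B).2 →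
      (e B).1 ∈ (C : Set X) ∧ (e B).1 ∉ (B : Set X) := by
    intro B C ha hb
    have hBC : B ≠ C := by
      intro h
      exact absurd (congrArg (fun D => (e D).2) h) (ne_of_gt hb)
    have hsub : (C : Set X) ⊆ insert ((e B).1) (B : Set X) := by
      intro x hx
      have hx' := he3 C hx
      rcases hx'.1.eq_or_lt with h | h
      · have : x = (e B).1 := by rw [← h, ha]
        rw [this]; exact mem_insert _ _
      · refine mem_insert_of_mem _ (he2 B ⟨?_, lt_of_le_of_lt hx'.2 hb⟩)
        rw [ha]; exact h
    have hns : ¬(C : Set X) ⊆ (B : Set X) := fun h => hBC (hmaxle C B h).symm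
    obtain ⟨x, hxC, hxB⟩ := not_subset.1 hns
    have hxb : x = (e B).1 := by
      rcases hsub hxC with h | h
      · exact h
      · exact absurd h hxB
    exact ⟨hxb ▸ hxC, fun hbB => hxB (hxb ▸ hbB)⟩
  -- no three with equal second endpoint and increasing first endpoints
  have T1 : ∀ B C D : ↥M, (e B).2 = (e C).2 → (e C).2 = (e D).2 →
      (e B).1 < (e C).1 → (e C).1 < (e D).1 → False := by
    intro B C D hb1 hb2 ha1 ha2
    obtain ⟨p1, -⟩ := hP3 B C hb1 ha1
    obtain ⟨-, p2⟩ := hP3 C D hb2 ha2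
    rw [hb1] at p1
    exact p2 p1
  have T2 : ∀ B C D : ↥M, (e B).1 = (e C).1 → (e C).1 = (e D).1 →
      (e C).2 < (e B).2 → (e D).2 < (e C).2 → False := by
    intro B C D ha1 ha2 hb1 hb2
    obtain ⟨p1, -⟩ := hP3' B C ha1 hb1
    obtain ⟨-, p2⟩ := hP3' C D ha2 hb2
    rw [ha1] at p1
    exact p2 p1
  -- at most 4 members with a given endpoint pair
  have hpair : ∀ a b : X, {B : ↥M | (e B).1 = a ∧ (e B).2 = b}.Finite := by
    intro a b
    have himg : ((fun B : ↥M => (B : Set X)) '' {B : ↥M | (e B).1 = a ∧ (e B).2 = b}).Finite := by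
      apply Set.Finite.subset (Set.toFinite
        {Ioo a b, insert a (Ioo a b), insert b (Ioo a b), insert a (insert b (Ioo a b))})
      rintro s ⟨B, ⟨hBa, hBb⟩, rfl⟩
      apply good_four
      exact ⟨by rw [← hBa, ← hBb]; exact he2 B, by rw [← hBa, ← hBb]; exact he3 B⟩
    exact Set.Finite.of_finite_image himg (fun B _ C _ h => Subtype.ext h)
  -- each fiber of the second endpoint is finite
  have hbfiber : ∀ w : X, {B : ↥M | (e B).2 = w}.Finite := by
    intro w
    by_contra hfinf
    have sort3 : ∀ B C D : ↥M, (e B).2 = w → (e C).2 = w → (e D).2 = w →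
        (e B).1 ≠ (e C).1 → (e B).1 ≠ (e D).1 → (e C).1 ≠ (e D).1 → False := by
      intro B C D h1 h2 h3 n1 n2 n3
      have T1s : ∀ P Q R : ↥M, (e P).2 = w → (e Q).2 = w → (e R).2 = w →
          (e P).1 < (e Q).1 → (e Q).1 < (e R).1 → False := fun P Q R hp hq hr h4 h5 =>
        T1 P Q R (hp.trans hq.symm) (hq.trans hr.symm) h4 h5
      rcases lt_trichotomy (e B).1 (e C).1 with hBC | hBC | hBC
      · rcases lt_trichotomy (e C).1 (e D).1 with hCD | hCD | hCD
        · exact T1s B C D h1 h2 h3 hBC hCD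
        · exact n3 hCD
        · rcases lt_trichotomy (e B).1 (e D).1 with hBD | hBD | hBD
          · exact T1s B D C h1 h3 h2 hBD hCD
          · exact n2 hBD
          · exact T1s D B C h3 h1 h2 hBD hBC
      · exact n1 hBC
      · rcases lt_trichotomy (e B).1 (e D).1 with hBD | hBD | hBD
        · exact T1s C B D h2 h1 h3 hBC hBD
        · exact n2 hBD
        · rcases lt_trichotomy (e C).1 (e D).1 with hCD | hCD | hCD
          · exact T1s C D B h2 h3 h1 hCD hBD
          · exact n3 hCD
          · exact T1s D C B h3 h2 h1 hCD hBC
    have hSinf : ((fun B : ↥M => (e B).1) '' {B : ↥M | (e B).2 = w}).Infinite := by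
      rcases Set.finite_or_infinite ((fun B : ↥M => (e B).1) '' {B : ↥M | (e B).2 = w}) with hSf | hSf
      · exfalso
        apply hfinf
        have hsub : {B : ↥M | (e B).2 = w} ⊆
            ⋃ a ∈ (fun B : ↥M => (e B).1) '' {B : ↥M | (e B).2 = w},
              {B : ↥M | (e B).1 = a ∧ (e B).2 = w} := by
          intro B hB
          exact mem_biUnion (mem_image_of_mem _ hB) ⟨rfl, hB⟩
        exact (hSf.biUnion fun a _ => hpair a w).subset hsub
      · exact hSf
    obtain ⟨x₀, hx₀, x₁, hx₁, x₂, hx₂, h01, h02, h12⟩ :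
        ∃ x₀ ∈ (fun B : ↥M => (e B).1) '' {B : ↥M | (e B).2 = w},
        ∃ x₁ ∈ (fun B : ↥M => (e B).1) '' {B : ↥M | (e B).2 = w},
        ∃ x₂ ∈ (fun B : ↥M => (e B).1) '' {B : ↥M | (e B).2 = w},
          x₀ ≠ x₁ ∧ x₀ ≠ x₂ ∧ x₁ ≠ x₂ := by
      set emb := hSinf.natEmbedding
      refine ⟨emb 0, (emb 0).2, emb 1, (emb 1).2, emb 2, (emb 2).2, ?_, ?_, ?_⟩
      · exact fun h => absurd (Subtype.coe_injective h) (emb.injective.ne (by decide))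
      · exact fun h => absurd (Subtype.coe_injective h) (emb.injective.ne (by decide))
      · exact fun h => absurd (Subtype.coe_injective h) (emb.injective.ne (by decide))
    obtain ⟨B₀, hB₀, rfl⟩ := hx₀
    obtain ⟨B₁, hB₁, rfl⟩ := hx₁
    obtain ⟨B₂, hB₂, rfl⟩ := hx₂
    exact sort3 B₀ B₁ B₂ hB₀ hB₁ hB₂ h01 h02 h12
  -- hence the set of second endpoints is infinite
  have hVinf : (Set.range (fun B : ↥M => (e B).2)).Infinite := by
    by_contra hV
    rw [Set.not_infinite] at hV
    have huniv : (univ : Set ↥M).Finite := by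
      have hsub : (univ : Set ↥M) ⊆ ⋃ w ∈ Set.range (fun B : ↥M => (e B).2),
          {B : ↥M | (e B).2 = w} := fun B _ => mem_biUnion (mem_range_self B) rfl
      exact ((hV.biUnion fun w _ => hbfiber w).subset hsub)
    exact Set.infinite_univ huniv
  -- an accumulation point of the second endpoints
  have hacc : ∃ z : X, ∀ o : Set X, IsOpen o → z ∈ o →
      (o ∩ Set.range (fun B : ↥M => (e B).2)).Infinite := by
    by_contra h
    push_neg at h
    choose o ho1 ho2 ho3 using h
    obtain ⟨t, ht⟩ := isCompact_univ.elim_finite_subcover o ho1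
      (fun z _ => mem_iUnion.2 ⟨z, ho2 z⟩)
    apply hVinf
    have hsub : Set.range (fun B : ↥M => (e B).2) ⊆ ⋃ z ∈ t,
        (o z ∩ Set.range (fun B : ↥M => (e B).2)) := by
      intro w hw
      obtain ⟨z, hz1, hz2⟩ := mem_iUnion₂.1 (ht (mem_univ w))
      exact mem_biUnion hz1 ⟨hz2, hw⟩
    exact (t.finite_toSet.biUnion fun z _ => ho3 z).subset hsub
  obtain ⟨z, hz⟩ := hacc
  by_cases hL : ∀ o : Set X, IsOpen o → z ∈ o →
      (o ∩ Set.range (fun B : ↥M => (e B).2) ∩ Iio z).Nonempty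
  · -- left accumulation: immediate contradiction
    set HL : Set (Set X) := {s | ∃ B : ↥M, (e B).2 < z ∧ s = (B : Set X)} with hHL
    have hHLG : HL ⊆ G := by rintro s ⟨B, -, rfl⟩; exact B.2.1
    have hzcl : z ∈ closure (⋃₀ HL) := by
      rw [mem_closure_iff]
      intro o ho hzo
      obtain ⟨w, ⟨hwo, hwV⟩, hwz⟩ := hL o ho hzo
      obtain ⟨B, rfl⟩ := hwV
      have hbcl : (e B).2 ∈ closure (B : Set X) := by
        rw [he4 B]; exact right_mem_Icc.2 (he1 B)
      obtain ⟨y, hyo, hyB⟩ := mem_closure_iff.1 hbcl o ho hwo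
      exact ⟨y, hyo, mem_sUnion.2 ⟨(B : Set X), ⟨B, hwz, rfl⟩, hyB⟩⟩
    rw [hCP HL hHLG] at hzcl
    obtain ⟨s, hs, hzs⟩ := mem_iUnion₂.1 hzcl
    obtain ⟨B, hBz, rfl⟩ := hs
    rw [he4 B] at hzs
    exact absurd hzs.2 (not_le.2 hBz)
  · -- right accumulation
    push_neg at hL
    obtain ⟨o₀, ho₀, hzo₀, hLempty⟩ := hL
    have hstep : ∀ o : Set X, IsOpen o → z ∈ o →
        ∃ w ∈ Set.range (fun B : ↥M => (e B).2), w ∈ o ∧ z < w := by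
      intro o ho hzo
      have hinf' : ((o ∩ o₀) ∩ Set.range (fun B : ↥M => (e B).2)).Infinite :=
        hz _ (ho.inter ho₀) ⟨hzo, hzo₀⟩
      obtain ⟨w₁, hw₁, w₂, hw₂, hne⟩ := hinf'.nontrivial
      have pick : ∀ w, w ∈ (o ∩ o₀) ∩ Set.range (fun B : ↥M => (e B).2) → w ≠ z →
          ∃ w' ∈ Set.range (fun B : ↥M => (e B).2), w' ∈ o ∧ z < w' := by
        intro w hw hwz
        rcases lt_trichotomy w z with h | h | h
        · exfalso
          have : w ∈ o₀ ∩ Set.range (fun B : ↥M => (e B).2) ∩ Iio z :=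
            ⟨⟨hw.1.2, hw.2⟩, h⟩
          rw [hLempty] at this
          exact this
        · exact absurd h hwz
        · exact ⟨w, hw.2, hw.1.1, h⟩
      rcases eq_or_ne w₁ z with h | h
      · exact pick w₂ hw₂ (by rw [← h]; exact hne.symm)
      · exact pick w₁ hw₁ h
    obtain ⟨w₀, hw₀V, -, hw₀z⟩ := hstep univ isOpen_univ (mem_univ z)
    have hstep' : ∀ u : X, z < u → ∃ w, w ∈ Set.range (fun B : ↥M => (e B).2) ∧ z < w ∧ w < u := by
      intro u hu
      obtain ⟨w, hwV, hwo, hwz⟩ := hstep (Iio u) isOpen_Iio hu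
      exact ⟨w, hwV, hwz, hwo⟩
    choose! f hf1 hf2 hf3 using hstep'
    set sq : ℕ → X := fun n => Nat.rec w₀ (fun _ w => f w) n with hsq
    have hsqs : ∀ n, sq (n + 1) = f (sq n) := fun n => rfl
    have hsqz : ∀ n, sq n ∈ Set.range (fun B : ↥M => (e B).2) ∧ z < sq n := by
      intro n
      induction n with
      | zero => exact ⟨hw₀V, hw₀z⟩
      | succ n ih =>
        rw [hsqs]
        exact ⟨hf1 _ ih.2, hf2 _ ih.2⟩
    have hdec : StrictAnti sq :=
      strictAnti_nat_of_succ_lt (fun n => by rw [hsqs]; exact hf3 _ (hsqz n).2)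
    have hBex : ∀ n, ∃ B : ↥M, (e B).2 = sq n := fun n => (hsqz n).1
    choose Bn hBn using hBex
    have hbdec : ∀ m n : ℕ, m < n → (e (Bn n)).2 < (e (Bn m)).2 := by
      intro m n h
      rw [hBn, hBn]
      exact hdec h
    have hainc : ∀ m n : ℕ, m < n → (e (Bn n)).1 ≤ (e (Bn m)).1 := by
      intro m n h
      by_contra h'
      exact hP2 (Bn m) (Bn n) (not_le.1 h') (hbdec m n h)
    rcases Set.finite_or_infinite (Set.range (fun n => (e (Bn n)).1)) with hra | hra
    · -- some first endpoint occurs infinitely often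
      have hfib : ∃ w, {n : ℕ | (e (Bn n)).1 = w}.Infinite := by
        by_contra h
        push_neg at h
        have huniv : (univ : Set ℕ).Finite := by
          have hsub : (univ : Set ℕ) ⊆ ⋃ w ∈ Set.range (fun n => (e (Bn n)).1),
              {n : ℕ | (e (Bn n)).1 = w} := fun n _ => mem_biUnion (mem_range_self n) rfl
          exact (hra.biUnion fun w _ => h w).subset hsub
        exact Set.infinite_univ huniv
      obtain ⟨w, hw⟩ := hfib
      obtain ⟨m, hm⟩ := hw.nonempty
      have hub : ∀ N : ℕ, ∃ n, n ∈ {n : ℕ | (e (Bn n)).1 = w} ∧ N < n := by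
        intro N
        by_contra h
        push_neg at h
        exact hw ((Set.finite_Iic N).subset (fun n hn => h n hn))
      obtain ⟨n, hn, hmn⟩ := hub m
      obtain ⟨p, hp, hnp⟩ := hub n
      exact T2 (Bn m) (Bn n) (Bn p) (hm.trans hn.symm) (hn.trans hp.symm)
        (hbdec m n hmn) (hbdec n p hnp)
    · -- infinitely many first endpoints : build strictly decreasing subsequence
      have hstep2 : ∀ N : ℕ, ∃ m, N < m ∧ (e (Bn m)).1 < (e (Bn N)).1 := by
        intro N
        by_contra h
        push_neg at h
        apply hra
        have hsub : Set.range (fun n => (e (Bn n)).1) ⊆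
            (fun n => (e (Bn n)).1) '' (Iic N) := by
          rintro x ⟨n, rfl⟩
          rcases le_or_gt n N with h' | h'
          · exact ⟨n, h', rfl⟩
          · exact ⟨N, self_mem_Iic, le_antisymm (h n h') (hainc N n h')⟩
        exact ((Set.finite_Iic N).image _).subset hsub
      choose g hg1 hg2 using hstep2
      set ψ : ℕ → ℕ := fun n => Nat.rec 0 (fun _ k => g k) n with hψ
      have hψs : ∀ n, ψ (n + 1) = g (ψ n) := fun n => rfl
      have haψ : ∀ n, (e (Bn (ψ (n + 1)))).1 < (e (Bn (ψ n))).1 := fun n => by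
        rw [hψs]; exact hg2 (ψ n)
      set HH : Set (Set X) := Set.range (fun n => (Bn (ψ n) : Set X)) with hHH
      have hHHG : HH ⊆ G := by rintro s ⟨n, rfl⟩; exact (Bn (ψ n)).2.1
      have hHHne : (⋃₀ HH).Nonempty := by
        obtain ⟨x, hx⟩ := hneM _ (Bn (ψ 0)).2
        exact ⟨x, mem_sUnion.2 ⟨_, ⟨0, rfl⟩, hx⟩⟩
      obtain ⟨al, hal⟩ := (isClosed_closure (s := ⋃₀ HH)).isCompact.exists_isLeast hHHne.closure
      have hal' : al ∈ ⋃ A ∈ HH, closure A := by rw [← hCP HH hHHG]; exact hal.1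
      obtain ⟨s, hs, hals⟩ := mem_iUnion₂.1 hal'
      obtain ⟨k, rfl⟩ := hs
      rw [he4 (Bn (ψ k))] at hals
      have h1 : (e (Bn (ψ k))).1 ≤ al := hals.1
      have h2 : al ≤ (e (Bn (ψ (k + 1)))).1 := by
        apply hal.2
        have hmem : (e (Bn (ψ (k + 1)))).1 ∈ closure ((Bn (ψ (k + 1))) : Set X) := by
          rw [he4]; exact left_mem_Icc.2 (he1 _)
        exact closure_mono (subset_sUnion_of_mem (show ((Bn (ψ (k + 1)) : Set X)) ∈ HH from ⟨k + 1, rfl⟩)) hmem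
      exact absurd (h1.trans h2) (not_le.2 (haψ k))

end CP

/-- The family of open order-convex sets subordinated to a cover. -/
def VCov {X : Type*} [LinearOrder X] [TopologicalSpace X] (U : Set (Set X)) : Set (Set X) :=
  {c | IsOpen c ∧ c.OrdConnected ∧ ∃ t ∈ U, c ⊆ t}


/-- A compact LOTS with a monotone closure-preserving operator has a monotone
closure-preserving operator producing finite covers by convex sets; moreover if the
original operator is open then so is the new one. -/
theorem stmt7 [LinearOrder X] [TopologicalSpace X] [OrderTopology X] [CompactSpace X]
    (r : Set (Set X) → Set (Set X)) (hr : MonotoneCPOperator r) :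
    ∃ r₂ : Set (Set X) → Set (Set X),
      (∀ U, IsOpenCover U →
        (r₂ U).Finite ∧ ⋃₀ r₂ U = Set.univ ∧ (∀ A ∈ r₂ U, A.OrdConnected) ∧
          Refines (r₂ U) U ∧ ClosurePreserving (r₂ U)) ∧
      (∀ U V, IsOpenCover U → IsOpenCover V → Refines U V → Refines (r₂ U) (r₂ V)) ∧
      ((∀ U, IsOpenCover U → ∀ A ∈ r U, IsOpen A) →
        ∀ U, IsOpenCover U → ∀ A ∈ r₂ U, IsOpen A) := by
  classical
  have hVC : ∀ U : Set (Set X), IsOpenCover U → IsOpenCover (VCov U) := by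
    intro U hU
    constructor
    · exact fun s hs => hs.1
    · rw [eq_univ_iff_forall]
      intro x
      have hx : x ∈ ⋃₀ U := hU.2 ▸ mem_univ x
      obtain ⟨t, htU, hxt⟩ := hx
      obtain ⟨c, hc1, hc2, hc3, hc4⟩ := exists_ordConnected_nbhd (hU.1 t htU) hxt
      exact mem_sUnion.2 ⟨c, ⟨hc1, hc2, t, htU, hc4⟩, hc3⟩
  have hVCref : ∀ U V : Set (Set X), Refines U V → Refines (VCov U) (VCov V) := by
    intro U V hUV c hc
    obtain ⟨hc1, hc2, t, htU, hct⟩ := hc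
    obtain ⟨t', ht', htt'⟩ := hUV t htU
    exact ⟨c, ⟨hc1, hc2, t', ht', hct.trans htt'⟩, Subset.rfl⟩
  have hGCP : ∀ U : Set (Set X), IsOpenCover U → ClosurePreserving (cHull '' r (VCov U)) :=
    fun U hU => closurePreserving_cHull_image ((hr.1 (VCov U) (hVC U hU)).2.2)
  have hGgood : ∀ U : Set (Set X), ∀ B ∈ cHull '' r (VCov U), IsGood B := by
    rintro U B ⟨A, hA, rfl⟩
    exact isGood_cHull A
  refine ⟨fun U => {B | Maximal (· ∈ cHull '' r (VCov U)) B}, ?_, ?_, ?_⟩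
  · intro U hU
    obtain ⟨hcov, href, hCPr⟩ := hr.1 (VCov U) (hVC U hU)
    refine ⟨maximal_finite (hGCP U hU) (hGgood U), ?_, ?_, ?_, ?_⟩
    · rw [eq_univ_iff_forall]
      intro x
      have hx : x ∈ ⋃₀ r (VCov U) := hcov ▸ mem_univ x
      obtain ⟨A, hA, hxA⟩ := hx
      obtain ⟨m, hm, hsub⟩ := exists_maximal_mem (hGCP U hU) (hGgood U)
        (mem_image_of_mem cHull hA)
      exact mem_sUnion.2 ⟨m, hm, hsub (subset_cHull A hxA)⟩
    · intro B hB
      obtain ⟨A, hA, rfl⟩ := hB.1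
      exact cHull_ordConnected A
    · intro B hB
      obtain ⟨A, hA, rfl⟩ := hB.1
      obtain ⟨c, hc, hAc⟩ := href A hA
      obtain ⟨hc1, hc2, t, htU, hct⟩ := hc
      exact ⟨t, htU, (cHull_subset hAc hc2).trans hct⟩
    · exact closurePreserving_mono (hGCP U hU) (fun B hB => hB.1)
  · intro U V hU hV hUV B hB
    obtain ⟨A, hA, rfl⟩ := hB.1
    have h1 : Refines (r (VCov U)) (r (VCov V)) :=
      hr.2 _ _ (hVC U hU) (hVC V hV) (hVCref U V hUV)
    obtain ⟨A', hA', hAA'⟩ := h1 A hA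
    obtain ⟨m, hm, hsub⟩ := exists_maximal_mem (hGCP V hV) (hGgood V)
      (mem_image_of_mem cHull hA')
    exact ⟨m, hm, (cHull_mono hAA').trans hsub⟩
  · intro hopen U hU B hB
    obtain ⟨A, hA, rfl⟩ := hB.1
    exact cHull_isOpen (hopen (VCov U) (hVC U hU) A hA)
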